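/- Suppose −1 < α < 0, q = 0, and |M| ≤ N. Then an admissible u is a global minimizer of ∫_Ω H_TF if and only if u₁(x) + u₋₁(x) = √n and u₀(x)² = 2·u₁(x)·u₋₁(x) for almost every x ∈ Ω. -/

import Mathlib

open MeasureTheory
open scoped ENNReal

noncomputable section

abbrev E3 := EuclideanSpace ℝ (Fin 3)

/-- The sign `s`: `1` if `α ≥ 0`, `-1` otherwise. -/
def sgn' (α : ℝ) : ℝ := if 0 ≤ α then 1 else -1

/-- Thomas–Fermi energy density; coordinates: `v 0 = u₁`, `v 1 = u₀`, `v 2 = u₋₁`. -/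
def HTF (α q : ℝ) (v : Fin 3 → ℝ) : ℝ :=
  (1/2) * (v 0 ^ 2 + v 1 ^ 2 + v 2 ^ 2) ^ 2
    + (α/2) * (2 * v 1 ^ 2 * (v 0 - sgn' α * v 2) ^ 2 + (v 0 ^ 2 - v 2 ^ 2) ^ 2)
    + q * (v 0 ^ 2 + v 2 ^ 2)

/-- Admissibility: `u ∈ L⁴(Ω; ℝ³)`, nonnegative components a.e. on `Ω`,
with prescribed total mass `N` and total magnetization `M`. -/
structure Admissible (Ω : Set E3) (N M : ℝ) (u : E3 → Fin 3 → ℝ) : Prop where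
  memL4 : MemLp u 4 (volume.restrict Ω)
  nonneg : ∀ᵐ x ∂(volume.restrict Ω), ∀ i, 0 ≤ u x i
  mass : ∫ x in Ω, (u x 0 ^ 2 + u x 1 ^ 2 + u x 2 ^ 2) = N
  mag : ∫ x in Ω, (u x 0 ^ 2 - u x 2 ^ 2) = M

/-- `u` is a global minimizer of `∫_Ω H_TF` among admissible functions. -/
def IsMinimizer (Ω : Set E3) (α q N M : ℝ) (u : E3 → Fin 3 → ℝ) : Prop :=
  Admissible Ω N M u ∧
    ∀ v : E3 → Fin 3 → ℝ, Admissible Ω N M v →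
      ∫ x in Ω, HTF α q (u x) ≤ ∫ x in Ω, HTF α q (v x)

/-! ### Auxiliary lemmas -/

section Aux

variable {μ : Measure E3}

lemma memℒp_comp' {u : E3 → Fin 3 → ℝ} (hu : MemLp u 4 μ) (i : Fin 3) :
    MemLp (fun x => u x i) 4 μ :=
  hu.of_le ((continuous_apply i).comp_aestronglyMeasurable hu.1)
    (Filter.Eventually.of_forall fun x => by
      simpa [Real.norm_eq_abs] using norm_le_pi_norm (u x) i)

lemma ennreal_half : (1:ℝ≥0∞)/2 = 1/4 + 1/4 := by
  rw [ENNReal.div_add_div_same]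
  rw [show (4:ℝ≥0∞) = 2*2 by norm_num, show (1:ℝ≥0∞)+1 = 2*1 by norm_num,
    ENNReal.mul_div_mul_left 1 2 (by norm_num) (by norm_num), one_div]

lemma memℒp_mul2 {u : E3 → Fin 3 → ℝ} (hu : MemLp u 4 μ) (i j : Fin 3) :
    MemLp (fun x => u x i * u x j) 2 μ := by
  have h := (memℒp_comp' hu j).smul (memℒp_comp' hu i) (hpqr := ⟨by simpa only [one_div] using ennreal_half.symm⟩)
  simpa [smul_eq_mul, Pi.mul_def] using h

lemma int_mul {f g : E3 → ℝ} (hf : MemLp f 2 μ) (hg : MemLp g 2 μ) :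
    Integrable (fun x => f x * g x) μ := by
  rw [← memLp_one_iff_integrable]
  have h : (1:ℝ≥0∞)/1 = 1/2 + 1/2 := by rw [ENNReal.add_halves]; norm_num
  simpa [smul_eq_mul, Pi.mul_def] using hg.smul hf (hpqr := ⟨by simpa only [one_div] using h.symm⟩)

/-- The nonnegative "excess" energy density. -/
def Gfun (c1 c2 n : ℝ) (v : E3 → Fin 3 → ℝ) (x : E3) : ℝ :=
  c1 * ((v x 0 ^ 2 + v x 1 ^ 2 + v x 2 ^ 2) - n) ^ 2
    + c2 * (v x 1 ^ 2 - 2 * v x 0 * v x 2) ^ 2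

lemma memℒp_rho {u : E3 → Fin 3 → ℝ} [IsFiniteMeasure μ] (hu : MemLp u 4 μ) (n : ℝ) :
    MemLp (fun x => (u x 0 ^ 2 + u x 1 ^ 2 + u x 2 ^ 2) - n) 2 μ := by
  have h := (((memℒp_mul2 hu 0 0).add (memℒp_mul2 hu 1 1)).add (memℒp_mul2 hu 2 2)).sub
    (memLp_const (μ := μ) (p := 2) n)
  have he : (fun x => (u x 0 ^ 2 + u x 1 ^ 2 + u x 2 ^ 2) - n)
      = ((fun x => u x 0 * u x 0) + (fun x => u x 1 * u x 1) + fun x => u x 2 * u x 2)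
        - fun _ => n := by
    funext x; simp [pow_two]
  rw [he]; exact h

lemma memℒp_D {u : E3 → Fin 3 → ℝ} (hu : MemLp u 4 μ) :
    MemLp (fun x => u x 1 ^ 2 - 2 * u x 0 * u x 2) 2 μ := by
  have h := (memℒp_mul2 hu 1 1).sub ((memℒp_mul2 hu 0 2).const_mul 2)
  have he : (fun x => u x 1 ^ 2 - 2 * u x 0 * u x 2)
      = (fun x => u x 1 * u x 1) - fun x => 2 * (u x 0 * u x 2) := by
    funext x
    show u x 1 ^ 2 - 2 * u x 0 * u x 2 = u x 1 * u x 1 - 2 * (u x 0 * u x 2)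
    ring
  rw [he]; exact h

lemma integrable_sq_of_memℒp2 {f : E3 → ℝ} (hf : MemLp f 2 μ) :
    Integrable (fun x => f x ^ 2) μ := by
  have h := int_mul hf hf
  simpa [pow_two] using h

lemma integrable_G {u : E3 → Fin 3 → ℝ} [IsFiniteMeasure μ] (hu : MemLp u 4 μ)
    (c1 c2 n : ℝ) : Integrable (Gfun c1 c2 n u) μ := by
  have h1 := (integrable_sq_of_memℒp2 (memℒp_rho hu n)).const_mul c1
  have h2 := (integrable_sq_of_memℒp2 (memℒp_D hu)).const_mul c2
  exact h1.add h2

lemma integrable_rho {u : E3 → Fin 3 → ℝ} [IsFiniteMeasure μ] (hu : MemLp u 4 μ) :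
    Integrable (fun x => u x 0 ^ 2 + u x 1 ^ 2 + u x 2 ^ 2) μ := by
  have h := ((memℒp_rho hu 0).integrable (by norm_num))
  simpa using h

/-- Constant competitor. -/
def wconst (a b c : ℝ) : E3 → Fin 3 → ℝ := fun _ => ![a, b, c]

lemma wconst0 (a b c : ℝ) (x : E3) : wconst a b c x 0 = a := rfl
lemma wconst1 (a b c : ℝ) (x : E3) : wconst a b c x 1 = b := rfl
lemma wconst2 (a b c : ℝ) (x : E3) : wconst a b c x 2 = c := rfl

end Aux

/-- Ferromagnetic `q = 0`: minimizers are exactly the functions with `u₁ + u₋₁ = √n` and `u₀² = 2u₁u₋₁` a.e. -/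
theorem ferro_q0
    (Ω : Set E3) (hΩm : MeasurableSet Ω) (hΩb : Bornology.IsBounded Ω)
    (hΩpos : 0 < volume Ω)
    (α q N M n m : ℝ)
    (hN : 0 < N)
    (hn : n = N / (volume Ω).toReal) (hm : m = M / (volume Ω).toReal)
    (hαl : -1 < α) (hαu : α < 0) (hq : q = 0) (hM : |M| ≤ N)
    (u : E3 → Fin 3 → ℝ) (hu : Admissible Ω N M u) :
    IsMinimizer Ω α q N M u ↔
      ∀ᵐ x ∂(volume.restrict Ω), u x 0 + u x 2 = Real.sqrt n ∧ u x 1 ^ 2 = 2 * u x 0 * u x 2 := by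
  subst hq
  have hΩfin : volume Ω < ⊤ := hΩb.measure_lt_top
  haveI : IsFiniteMeasure (volume.restrict Ω) :=
    ⟨by rw [Measure.restrict_apply_univ]; exact hΩfin⟩
  set V : ℝ := (volume Ω).toReal with hVdef
  have hVpos : 0 < V := ENNReal.toReal_pos hΩpos.ne' hΩfin.ne
  have hnV : n * V = N := by rw [hn]; field_simp
  have hmV : m * V = M := by rw [hm]; field_simp
  have hnpos : 0 < n := by rw [hn]; exact div_pos hN hVpos
  set c1 : ℝ := (1 + α) / 2 with hc1def
  set c2 : ℝ := (-α) / 2 with hc2def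
  have hc1 : 0 < c1 := by rw [hc1def]; linarith
  have hc2 : 0 < c2 := by rw [hc2def]; linarith
  have hHTF : ∀ v : Fin 3 → ℝ, HTF α 0 v
      = c1 * (v 0 ^ 2 + v 1 ^ 2 + v 2 ^ 2) ^ 2 + c2 * (v 1 ^ 2 - 2 * v 0 * v 2) ^ 2 := by
    intro v
    simp only [HTF, sgn', if_neg (not_le.mpr hαu), hc1def, hc2def]
    ring
  have hGnonneg : ∀ (v : E3 → Fin 3 → ℝ) (x : E3), 0 ≤ Gfun c1 c2 n v x := fun v x =>
    add_nonneg (mul_nonneg hc1.le (sq_nonneg _)) (mul_nonneg hc2.le (sq_nonneg _))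
  -- key identity: for admissible v, ∫ H = ∫ G + c1 * (n * N)
  have key : ∀ v : E3 → Fin 3 → ℝ, Admissible Ω N M v →
      (∫ x in Ω, HTF α 0 (v x)) = (∫ x in Ω, Gfun c1 c2 n v x) + c1 * (n * N) := by
    intro v hv
    have hGint : Integrable (Gfun c1 c2 n v) (volume.restrict Ω) :=
      integrable_G hv.memL4 c1 c2 n
    have hρint : Integrable (fun x => v x 0 ^ 2 + v x 1 ^ 2 + v x 2 ^ 2)
        (volume.restrict Ω) := integrable_rho hv.memL4
    have hpt : (fun x => HTF α 0 (v x))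
        = fun x => Gfun c1 c2 n v x
            + ((2 * c1 * n) * (v x 0 ^ 2 + v x 1 ^ 2 + v x 2 ^ 2) + (-(c1 * n ^ 2))) := by
      funext x; rw [hHTF]; simp only [Gfun]; ring
    calc ∫ x in Ω, HTF α 0 (v x)
        = ∫ x in Ω, (Gfun c1 c2 n v x
            + ((2 * c1 * n) * (v x 0 ^ 2 + v x 1 ^ 2 + v x 2 ^ 2) + (-(c1 * n ^ 2)))) := by
          rw [hpt]
      _ = (∫ x in Ω, Gfun c1 c2 n v x)
            + ((∫ x in Ω, (2 * c1 * n) * (v x 0 ^ 2 + v x 1 ^ 2 + v x 2 ^ 2))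
              + ∫ _ in Ω, (-(c1 * n ^ 2)) ) := by
          have hrest : Integrable
              (fun x => (2 * c1 * n) * (v x 0 ^ 2 + v x 1 ^ 2 + v x 2 ^ 2) + (-(c1 * n ^ 2)))
              (volume.restrict Ω) := (hρint.const_mul _).add (integrable_const _)
          have h1 := integral_add hGint hrest
          have h2 := integral_add (μ := volume.restrict Ω)
            (hρint.const_mul (2 * c1 * n)) (integrable_const (-(c1 * n ^ 2)))
          rw [h1, h2]
      _ = (∫ x in Ω, Gfun c1 c2 n v x) + ((2 * c1 * n) * N + V * (-(c1 * n ^ 2))) := by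
          rw [integral_const_mul, hv.mass, setIntegral_const, smul_eq_mul, measureReal_def, ← hVdef]
      _ = (∫ x in Ω, Gfun c1 c2 n v x) + c1 * (n * N) := by
          linear_combination (-(c1 * n)) * hnV
  have lower : ∀ v : E3 → Fin 3 → ℝ, Admissible Ω N M v →
      c1 * (n * N) ≤ ∫ x in Ω, HTF α 0 (v x) := by
    intro v hv
    rw [key v hv]
    have h0 : 0 ≤ ∫ x in Ω, Gfun c1 c2 n v x := integral_nonneg (hGnonneg v)
    linarith
  -- the constant competitor
  set s : ℝ := Real.sqrt n with hsdef
  have hs : 0 < s := Real.sqrt_pos.mpr hnpos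
  have hs2 : s ^ 2 = n := Real.sq_sqrt hnpos.le
  obtain ⟨hM1, hM2⟩ := abs_le.mp hM
  have hmn1 : -n ≤ m := by
    rw [hn, hm, ← neg_div]
    gcongr
  have hmn2 : m ≤ n := by
    rw [hn, hm]
    gcongr
  set a0 : ℝ := (s + m / s) / 2 with ha0def
  set c0 : ℝ := (s - m / s) / 2 with hc0def
  have ha0' : a0 = (n + m) / (2 * s) := by
    rw [ha0def, ← hs2]; field_simp
  have hc0' : c0 = (n - m) / (2 * s) := by
    rw [hc0def, ← hs2]; field_simp
  have ha0 : 0 ≤ a0 := by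
    rw [ha0']; apply div_nonneg (by linarith) (by positivity)
  have hc0 : 0 ≤ c0 := by
    rw [hc0']; apply div_nonneg (by linarith) (by positivity)
  set b0 : ℝ := Real.sqrt (2 * (a0 * c0)) with hb0def
  have hb0 : 0 ≤ b0 := Real.sqrt_nonneg _
  have hb0sq : b0 ^ 2 = 2 * (a0 * c0) :=
    Real.sq_sqrt (by have := mul_nonneg ha0 hc0; linarith)
  have hsum : a0 + c0 = s := by rw [ha0def, hc0def]; ring
  have hsumsq : (a0 + c0) ^ 2 = n := by rw [hsum]; exact hs2
  have hρw : a0 ^ 2 + b0 ^ 2 + c0 ^ 2 = n := by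
    linear_combination hb0sq + hsumsq
  have hmag0 : a0 ^ 2 - c0 ^ 2 = m := by
    rw [ha0def, hc0def]
    field_simp
    ring
  have hwadm : Admissible Ω N M (wconst a0 b0 c0) := by
    refine ⟨memLp_const _, Filter.Eventually.of_forall fun x i => ?_, ?_, ?_⟩
    · fin_cases i
      · exact ha0
      · exact hb0
      · exact hc0
    · simp only [wconst0, wconst1, wconst2, hρw, setIntegral_const, smul_eq_mul, ← hVdef]
      rw [mul_comm]; exact hnV
    · simp only [wconst0, wconst2]
      have : a0 ^ 2 - c0 ^ 2 = m := hmag0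
      rw [show (fun _ : E3 => a0 ^ 2 - c0 ^ 2) = fun _ : E3 => m from funext fun _ => this]
      rw [setIntegral_const, smul_eq_mul, measureReal_def, ← hVdef, mul_comm]
      exact hmV
  have hwE : ∫ x in Ω, HTF α 0 (wconst a0 b0 c0 x) = c1 * (n * N) := by
    rw [key _ hwadm]
    have hG0 : ∀ x : E3, Gfun c1 c2 n (wconst a0 b0 c0) x = 0 := by
      intro x
      simp only [Gfun, wconst0, wconst1, wconst2]
      rw [hρw, hb0sq]; ring
    simp only [hG0, integral_zero, zero_add]
  constructor
  · rintro ⟨-, hmin⟩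
    have hle := hmin _ hwadm
    rw [hwE, key u hu] at hle
    have hGint : Integrable (Gfun c1 c2 n u) (volume.restrict Ω) :=
      integrable_G hu.memL4 c1 c2 n
    have h0 : ∫ x in Ω, Gfun c1 c2 n u x = 0 :=
      le_antisymm (by linarith) (integral_nonneg (hGnonneg u))
    have hae : Gfun c1 c2 n u =ᵐ[volume.restrict Ω] 0 :=
      (integral_eq_zero_iff_of_nonneg_ae
        (Filter.Eventually.of_forall fun x => hGnonneg u x) hGint).mp h0
    filter_upwards [hae, hu.nonneg] with x hx hpos
    simp only [Gfun, Pi.zero_apply] at hx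
    have hXnn : 0 ≤ c1 * ((u x 0 ^ 2 + u x 1 ^ 2 + u x 2 ^ 2) - n) ^ 2 :=
      mul_nonneg hc1.le (sq_nonneg _)
    have hYnn : 0 ≤ c2 * (u x 1 ^ 2 - 2 * u x 0 * u x 2) ^ 2 :=
      mul_nonneg hc2.le (sq_nonneg _)
    have hX0 : c1 * ((u x 0 ^ 2 + u x 1 ^ 2 + u x 2 ^ 2) - n) ^ 2 = 0 := by linarith
    have hY0 : c2 * (u x 1 ^ 2 - 2 * u x 0 * u x 2) ^ 2 = 0 := by linarith
    have hA2 : ((u x 0 ^ 2 + u x 1 ^ 2 + u x 2 ^ 2) - n) ^ 2 = 0 :=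
      (mul_eq_zero.mp hX0).resolve_left hc1.ne'
    have hB2 : (u x 1 ^ 2 - 2 * u x 0 * u x 2) ^ 2 = 0 :=
      (mul_eq_zero.mp hY0).resolve_left hc2.ne'
    have hA : (u x 0 ^ 2 + u x 1 ^ 2 + u x 2 ^ 2) - n = 0 := sq_eq_zero_iff.mp hA2
    have hB : u x 1 ^ 2 - 2 * u x 0 * u x 2 = 0 := sq_eq_zero_iff.mp hB2
    constructor
    · have hsq' : (u x 0 + u x 2) ^ 2 = n := by linear_combination hA - hB
      have hnn : 0 ≤ u x 0 + u x 2 := add_nonneg (hpos 0) (hpos 2)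
      rw [hsdef, ← hsq', Real.sqrt_sq hnn]
    · linarith
  · intro hcond
    refine ⟨hu, fun v hv => ?_⟩
    rw [key u hu]
    have hae0 : Gfun c1 c2 n u =ᵐ[volume.restrict Ω] 0 := by
      filter_upwards [hcond] with x hx
      obtain ⟨h1, h2⟩ := hx
      have h3 : (u x 0 + u x 2) ^ 2 = n := by rw [h1]; exact hs2
      have hρ : u x 0 ^ 2 + u x 1 ^ 2 + u x 2 ^ 2 = n := by
        linear_combination h3 + h2
      simp only [Gfun, Pi.zero_apply]
      rw [hρ, h2]; ring
    have hzero : ∫ x in Ω, Gfun c1 c2 n u x = 0 := by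
      simpa using integral_congr_ae hae0
    rw [hzero, zero_add]
    exact lower v hv
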